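/- Let C_X, C_Z ⊆ F₂^N be subspaces with C_X^⊥ ⊆ C_Z and C_Z^⊥ ⊆ C_X, with dim C_X = dim C_Z^⊥ + 1 (one encoded logical qubit), and let x ∈ C_Z \ C_X^⊥ and z ∈ C_X \ C_Z^⊥. Then for every subset E ⊆ Fin N, either there exists x' ∈ x + C_X^⊥ with supp(x') ⊆ E, or there exists z' ∈ z + C_Z^⊥ with supp(z') ⊆ Eᶜ. (If a region E does not fully contain any manifestation of the logical X̄, then its complement fully contains a manifestation of the logical Z̄.) -/

import Mathlib

def pairing {N : ℕ} (u v : Fin N → ZMod 2) : ZMod 2 := ∑ i, u i * v i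

def dualCode {N : ℕ} (C : Submodule (ZMod 2) (Fin N → ZMod 2)) :
    Submodule (ZMod 2) (Fin N → ZMod 2) where
  carrier := {u | ∀ c ∈ C, pairing u c = 0}
  add_mem' := by
    intro a b ha hb c hc
    have h : pairing (a + b) c = pairing a c + pairing b c := by
      simp [pairing, add_mul, Finset.sum_add_distrib]
    simp only [Set.mem_setOf_eq] at *
    rw [h, ha c hc, hb c hc, add_zero]
  zero_mem' := by
    intro c hc
    simp [pairing]
  smul_mem' := by
    intro r a ha c hc
    have h : pairing (r • a) c = r * pairing a c := by
      simp [pairing, Finset.mul_sum, mul_assoc]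
    simp only [Set.mem_setOf_eq] at *
    rw [h, ha c hc, mul_zero]

namespace CssAux

lemma zmod2_cases (a : ZMod 2) : a = 0 ∨ a = 1 := by fin_cases a; exacts [Or.inl rfl, Or.inr rfl]

lemma mem_dualCode {N : ℕ} {C : Submodule (ZMod 2) (Fin N → ZMod 2)}
    {u : Fin N → ZMod 2} : u ∈ dualCode C ↔ ∀ c ∈ C, pairing u c = 0 := Iff.rfl

lemma pairing_comm {N : ℕ} (u v : Fin N → ZMod 2) : pairing u v = pairing v u := by
  simp [pairing, mul_comm]

lemma pairing_sub_left {N : ℕ} (a b c : Fin N → ZMod 2) :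
    pairing (a - b) c = pairing a c - pairing b c := by
  simp [pairing, sub_mul, Finset.sum_sub_distrib]

lemma pairing_add_left {N : ℕ} (a b c : Fin N → ZMod 2) :
    pairing (a + b) c = pairing a c + pairing b c := by
  simp [pairing, add_mul, Finset.sum_add_distrib]

lemma pairing_smul_left {N : ℕ} (r : ZMod 2) (a c : Fin N → ZMod 2) :
    pairing (r • a) c = r * pairing a c := by
  simp [pairing, Finset.mul_sum, mul_assoc]

lemma pairing_single {N : ℕ} (u : Fin N → ZMod 2) (i : Fin N) :
    pairing u (Pi.single i 1) = u i := by
  simp [pairing, Pi.single_apply, Finset.sum_ite_eq']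

noncomputable def B (N : ℕ) : LinearMap.BilinForm (ZMod 2) (Fin N → ZMod 2) :=
  LinearMap.mk₂ (ZMod 2) (fun u v => ∑ i, u i * v i)
    (fun a b c => by simp [add_mul, Finset.sum_add_distrib])
    (fun r a c => by simp [Finset.mul_sum, mul_assoc])
    (fun a b c => by simp [mul_add, Finset.sum_add_distrib])
    (fun r a c => by simp [Finset.mul_sum, mul_comm, mul_left_comm])

lemma B_apply {N : ℕ} (u v : Fin N → ZMod 2) : B N u v = pairing u v := rfl

lemma B_symm (N : ℕ) : (B N).IsSymm := by
  constructor
  intro a b; simp [B, mul_comm]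

lemma B_refl (N : ℕ) : (B N).IsRefl := (B_symm N).isRefl

lemma B_nondeg (N : ℕ) : (B N).Nondegenerate := by
  constructor <;>
  · intro u hu
    funext i
    have := hu (Pi.single i 1)
    simpa [B, Pi.single_apply, Finset.sum_ite_eq', Finset.sum_ite_eq] using this

lemma dualCode_eq {N : ℕ} (C : Submodule (ZMod 2) (Fin N → ZMod 2)) :
    dualCode C = (B N).orthogonal C := by
  ext u
  rw [LinearMap.BilinForm.mem_orthogonal_iff, mem_dualCode]
  constructor
  · intro h n hn
    have := h n hn
    rw [pairing_comm] at this
    exact this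
  · intro h c hc
    have := h c hc
    rw [B_apply, pairing_comm] at this
    exact this

lemma finrank_dual {N : ℕ} (C : Submodule (ZMod 2) (Fin N → ZMod 2)) :
    Module.finrank (ZMod 2) (dualCode C) + Module.finrank (ZMod 2) C = N := by
  rw [dualCode_eq, LinearMap.BilinForm.finrank_orthogonal (B_nondeg N)]
  have h1 : Module.finrank (ZMod 2) (Fin N → ZMod 2) = N := Module.finrank_fin_fun _
  have h2 : Module.finrank (ZMod 2) C ≤ Module.finrank (ZMod 2) (Fin N → ZMod 2) :=
    Submodule.finrank_le C
  omega

lemma dual_dual {N : ℕ} (C : Submodule (ZMod 2) (Fin N → ZMod 2)) :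
    dualCode (dualCode C) = C := by
  rw [dualCode_eq, dualCode_eq,
    LinearMap.BilinForm.orthogonal_orthogonal (B_nondeg N) (B_refl N)]

lemma dual_sup {N : ℕ} (A C : Submodule (ZMod 2) (Fin N → ZMod 2)) :
    dualCode (A ⊔ C) = dualCode A ⊓ dualCode C := by
  ext u
  simp only [mem_dualCode, Submodule.mem_inf]
  constructor
  · intro h
    exact ⟨fun c hc => h c (Submodule.mem_sup_left hc),
      fun c hc => h c (Submodule.mem_sup_right hc)⟩
  · rintro ⟨hA, hC⟩ c hc
    rcases Submodule.mem_sup.1 hc with ⟨a, ha, b, hb, rfl⟩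
    rw [pairing_comm, pairing_add_left, pairing_comm a, pairing_comm b,
      hA a ha, hC b hb, add_zero]

lemma dual_inf {N : ℕ} (A C : Submodule (ZMod 2) (Fin N → ZMod 2)) :
    dualCode (A ⊓ C) = dualCode A ⊔ dualCode C := by
  conv_lhs => rw [← dual_dual A, ← dual_dual C, ← dual_sup]
  exact dual_dual _

/-- vectors supported in E -/
def VE {N : ℕ} (E : Set (Fin N)) : Submodule (ZMod 2) (Fin N → ZMod 2) where
  carrier := {v | ∀ i, i ∉ E → v i = 0}
  add_mem' := by intro a b ha hb i hi; simp [ha i hi, hb i hi]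
  zero_mem' := by intro i _; rfl
  smul_mem' := by intro r a ha i hi; simp [ha i hi]

lemma mem_VE {N : ℕ} {E : Set (Fin N)} {v : Fin N → ZMod 2} :
    v ∈ VE E ↔ ∀ i, i ∉ E → v i = 0 := Iff.rfl

lemma dual_VE {N : ℕ} (E : Set (Fin N)) : dualCode (VE E) = VE Eᶜ := by
  ext u
  rw [mem_dualCode, mem_VE]
  constructor
  · intro h i hi
    rw [Set.notMem_compl_iff] at hi
    have hs : (Pi.single i 1 : Fin N → ZMod 2) ∈ VE E := by
      intro j hj
      have : j ≠ i := fun hji => hj (hji ▸ hi)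
      simp [Pi.single_apply, this]
    have := h _ hs
    rwa [pairing_single] at this
  · intro h v hv
    rw [pairing]
    apply Finset.sum_eq_zero
    intro i _
    by_cases hi : i ∈ E
    · rw [h i (by simpa using hi), zero_mul]
    · rw [hv i hi, mul_zero]

end CssAux

open CssAux in
/-- Cleaning dichotomy for [N,1,d] CSS codes: if a region E does not fully contain any
manifestation of the logical X̄, then its complement fully contains a manifestation of
the logical Z̄. -/
theorem css_cleaning_dichotomy (N : ℕ)
    (CX CZ : Submodule (ZMod 2) (Fin N → ZMod 2))
    (h1 : dualCode CX ≤ CZ) (h2 : dualCode CZ ≤ CX)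
    (hdim : Module.finrank (ZMod 2) CX = Module.finrank (ZMod 2) (dualCode CZ) + 1)
    (x z : Fin N → ZMod 2)
    (hx : x ∈ CZ) (hx' : x ∉ dualCode CX)
    (hz : z ∈ CX) (hz' : z ∉ dualCode CZ) :
    ∀ E : Set (Fin N),
      (∃ x' : Fin N → ZMod 2, x' - x ∈ dualCode CX ∧ ∀ i, x' i = 1 → i ∈ E) ∨
      (∃ z' : Fin N → ZMod 2, z' - z ∈ dualCode CZ ∧ ∀ i, z' i = 1 → i ∈ Eᶜ) := by
  -- dimension bookkeeping
  have hdX := finrank_dual CX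
  have hdZ := finrank_dual CZ
  have hrank : Module.finrank (ZMod 2) (dualCode CX) + 1 = Module.finrank (ZMod 2) CZ := by
    omega
  have hxne : x ≠ 0 := fun h => hx' (h ▸ (dualCode CX).zero_mem)
  -- CZ = dualCode CX ⊔ span {x}
  have hCZ : CZ = dualCode CX ⊔ Submodule.span (ZMod 2) {x} := by
    have hle : dualCode CX ⊔ Submodule.span (ZMod 2) {x} ≤ CZ :=
      sup_le h1 ((Submodule.span_singleton_le_iff_mem _ _).2 hx)
    have hinf : dualCode CX ⊓ Submodule.span (ZMod 2) {x} = ⊥ := by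
      rw [eq_bot_iff]
      rintro v ⟨hv1, hv2⟩
      rcases Submodule.mem_span_singleton.1 hv2 with ⟨α, rfl⟩
      rcases zmod2_cases α with h | h
      · simp [h]
      · exact absurd (by simpa [h] using hv1) hx'
    have hsup : Module.finrank (ZMod 2) (dualCode CX ⊔ Submodule.span (ZMod 2) {x} :
        Submodule (ZMod 2) (Fin N → ZMod 2)) = Module.finrank (ZMod 2) (dualCode CX) + 1 := by
      have := Submodule.finrank_sup_add_finrank_inf_eq (dualCode CX)
        (Submodule.span (ZMod 2) {x})
      rw [hinf, finrank_span_singleton hxne] at this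
      simpa using this
    exact (Submodule.eq_of_le_of_finrank_le hle (by rw [hsup]; omega)).symm
  -- pairing x z = 1
  have hxz : pairing x z = 1 := by
    rw [mem_dualCode] at hz'
    push_neg at hz'
    obtain ⟨c, hcZ, hc⟩ := hz'
    rw [hCZ] at hcZ
    rcases Submodule.mem_sup.1 hcZ with ⟨u, hu, w, hw, rfl⟩
    rcases Submodule.mem_span_singleton.1 hw with ⟨α, rfl⟩
    have huz : pairing z u = 0 := by
      rw [pairing_comm]; exact hu z hz
    rw [pairing_comm, pairing_add_left, pairing_comm u, huz, zero_add,
      pairing_smul_left] at hc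
    rcases zmod2_cases α with h | h
    · simp [h] at hc
    · rcases zmod2_cases (pairing x z) with h' | h'
      · rw [h, h', mul_zero] at hc; exact absurd rfl hc
      · exact h'
  intro E
  by_cases hcase : ∃ w ∈ CZ ⊓ VE E, pairing w z = 1
  · -- a manifestation of X̄ inside E
    obtain ⟨w, ⟨hwZ, hwE⟩, hwz⟩ := hcase
    left
    refine ⟨w, ?_, ?_⟩
    · have hmem : w - x ∈ CZ := sub_mem hwZ hx
      rw [hCZ] at hmem
      rcases Submodule.mem_sup.1 hmem with ⟨u, hu, v, hv, huv⟩
      rcases Submodule.mem_span_singleton.1 hv with ⟨α, rfl⟩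
      have hp : pairing (w - x) z = 0 := by
        rw [pairing_sub_left, hwz, hxz, sub_self]
      have huz : pairing u z = 0 := hu z hz
      rw [← huv, pairing_add_left, pairing_smul_left, hxz, mul_one, huz, zero_add] at hp
      rw [← huv, hp, zero_smul, add_zero]
      exact hu
    · intro i hi
      by_contra hiE
      rw [hwE i hiE] at hi
      exact absurd hi (by decide)
  · -- no such w: z is orthogonal to CZ ⊓ VE E
    right
    have hzmem : z ∈ dualCode (CZ ⊓ VE E) := by
      rw [mem_dualCode]
      intro c hc
      rcases zmod2_cases (pairing c z) with h | h
      · rwa [pairing_comm]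
      · exact absurd ⟨c, hc, h⟩ hcase
    rw [dual_inf, dual_VE] at hzmem
    rcases Submodule.mem_sup.1 hzmem with ⟨c, hc, v, hv, hcv⟩
    refine ⟨v, ?_, ?_⟩
    · have : v - z = -c := by rw [← hcv]; ring
      rw [this]
      exact neg_mem hc
    · intro i hi
      by_contra hiE
      rw [hv i hiE] at hi
      exact absurd hi (by decide)
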